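/- Let p be a prime and n ≥ 1. Let γ ∈ GL_n(ℚ_p) be a diagonal matrix whose diagonal entries are pairwise distinct elements of ℚ_pˣ. Then the set of upper triangular unipotent matrices u (i.e. u has 1's on the diagonal and 0's below the diagonal) such that every entry of u⁻¹ · γ · u lies in ℤ_p is a compact subset of the matrix space. -/
import Mathlib

section Aux

variable {p : ℕ} [Fact p.Prime] {n : ℕ}

/-- A unipotent upper triangular matrix has determinant 1. -/
lemma aux_det_one (u : Matrix (Fin n) (Fin n) ℚ_[p])
    (h1 : ∀ i, u i i = 1) (h2 : ∀ i j : Fin n, j < i → u i j = 0) : u.det = 1 := by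
  have hbt : u.BlockTriangular id := fun i j h => h2 i j h
  rw [Matrix.det_of_upperTriangular hbt]
  simp [h1]

lemma aux_inv_eq_adjugate (u : Matrix (Fin n) (Fin n) ℚ_[p])
    (h1 : ∀ i, u i i = 1) (h2 : ∀ i j : Fin n, j < i → u i j = 0) :
    u⁻¹ = u.adjugate := by
  rw [Matrix.inv_def, aux_det_one u h1 h2, Ring.inverse_one, one_smul]

end Aux

/-- Let `γ` be a diagonal matrix over `ℚ_p` with pairwise distinct nonzero diagonal
entries. The set of upper triangular unipotent matrices `u` such that `u⁻¹ γ u` has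
all entries in `ℤ_p` is compact. -/
theorem compact_unipotent_conjugation_set
    (p : ℕ) [Fact p.Prime] (n : ℕ) (hn : 1 ≤ n)
    (d : Fin n → ℚ_[p]) (hd0 : ∀ i, d i ≠ 0) (hdinj : Function.Injective d) :
    IsCompact {u : Matrix (Fin n) (Fin n) ℚ_[p] |
      (∀ i, u i i = 1) ∧ (∀ i j : Fin n, j < i → u i j = 0) ∧
      ∀ i j, ‖(u⁻¹ * Matrix.diagonal d * u) i j‖ ≤ 1} := by
  classical
  set D : Matrix (Fin n) (Fin n) ℚ_[p] := Matrix.diagonal d with hD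
  set S : Set (Matrix (Fin n) (Fin n) ℚ_[p]) :=
    {u | (∀ i, u i i = 1) ∧ (∀ i j : Fin n, j < i → u i j = 0) ∧
      ∀ i j, ‖(u⁻¹ * D * u) i j‖ ≤ 1} with hS
  -- the bound constant
  set M : ℝ := 1 + ∑ q ∈ Finset.univ.offDiag, ‖d q.1 - d (q.2 : Fin n)‖⁻¹ with hM
  have hM1 : (1 : ℝ) ≤ M := by
    have : (0:ℝ) ≤ ∑ q ∈ Finset.univ.offDiag, ‖d q.1 - d (q.2 : Fin n)‖⁻¹ :=
      Finset.sum_nonneg fun q _ => by positivity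
    rw [hM]; linarith
  have hM0 : (0:ℝ) ≤ M := le_trans zero_le_one hM1
  have hMd : ∀ i j : Fin n, i ≠ j → ‖d i - d j‖⁻¹ ≤ M := by
    intro i j hij
    have hmem : (i, j) ∈ Finset.univ.offDiag := by
      simp [Finset.mem_offDiag, hij]
    have := Finset.single_le_sum
      (f := fun q : Fin n × Fin n => ‖d q.1 - d q.2‖⁻¹)
      (fun q _ => by positivity) hmem
    calc ‖d i - d j‖⁻¹ ≤ ∑ q ∈ Finset.univ.offDiag, ‖d q.1 - d (q.2 : Fin n)‖⁻¹ := this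
      _ ≤ M := by rw [hM]; linarith
  -- key entrywise bound for elements of S
  have key : ∀ u ∈ S, ∀ i j : Fin n, ‖u i j‖ ≤ M ^ n := by
    intro u hu i j
    obtain ⟨h1, h2, h3⟩ := hu
    have hbt : u.BlockTriangular id := fun i j h => h2 i j h
    have hdet : u.det = 1 := aux_det_one u h1 h2
    have hunit : IsUnit u.det := hdet ▸ isUnit_one
    have hInv : Invertible u := u.invertibleOfIsUnitDet hunit
    set B : Matrix (Fin n) (Fin n) ℚ_[p] := u⁻¹ * D * u with hB
    have hvt : (u⁻¹).BlockTriangular id := Matrix.blockTriangular_inv_of_blockTriangular hbt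
    have hBt : B.BlockTriangular id :=
      (hvt.mul (Matrix.blockTriangular_diagonal d)).mul hbt
    have huB : u * B = D * u := by
      rw [hB, ← Matrix.mul_assoc, ← Matrix.mul_assoc, Matrix.mul_nonsing_inv u hunit,
        Matrix.one_mul]
    -- diagonal entries of u⁻¹ are 1
    have hvdiag : ∀ i : Fin n, u⁻¹ i i = 1 := by
      intro i
      have huv : u * u⁻¹ = 1 := Matrix.mul_nonsing_inv u hunit
      have : (u * u⁻¹) i i = (1 : Matrix (Fin n) (Fin n) ℚ_[p]) i i := by rw [huv]
      rw [Matrix.mul_apply, Matrix.one_apply_eq] at this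
      rw [Finset.sum_eq_single i (fun k _ hk => ?_) (by simp)] at this
      · rw [h1 i, one_mul] at this; exact this
      · rcases lt_or_gt_of_ne hk with h | h
        · rw [h2 i k h, zero_mul]
        · rw [hvt h, mul_zero]
    -- diagonal entries of B are the d j
    have hBdiag : ∀ j : Fin n, B j j = d j := by
      intro j
      have : B j j = ∑ k, u⁻¹ j k * (D * u) k j := by
        rw [hB, Matrix.mul_assoc, Matrix.mul_apply]
      rw [Finset.sum_eq_single j (fun k _ hk => ?_) (by simp)] at this
      · rw [hvdiag j, one_mul, hD, Matrix.diagonal_mul, h1 j, mul_one] at this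
        exact this
      · rcases lt_or_gt_of_ne hk with h | h
        · rw [hvt h, zero_mul]
        · rw [hD, Matrix.diagonal_mul, h2 k j h, mul_zero, mul_zero]
    -- the key identity
    have hid : ∀ i j : Fin n, i < j →
        (d i - d j) * u i j = ∑ k ∈ Finset.Ico i j, u i k * B k j := by
      intro i j hij
      have heq : ∑ k, u i k * B k j = d i * u i j := by
        have : (u * B) i j = (D * u) i j := by rw [huB]
        rwa [Matrix.mul_apply, hD, Matrix.diagonal_mul] at this
      have hsub : ∑ k ∈ Finset.Icc i j, u i k * B k j = ∑ k, u i k * B k j := by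
        apply Finset.sum_subset (Finset.subset_univ _)
        intro k _ hk
        rw [Finset.mem_Icc] at hk
        push_neg at hk
        by_cases hik : i ≤ k
        · rw [hBt (hk hik), mul_zero]
        · rw [h2 i k (lt_of_not_ge hik), zero_mul]
      have hins : Finset.Icc i j = insert j (Finset.Ico i j) :=
        (Finset.Ico_insert_right (le_of_lt hij)).symm
      rw [hins, Finset.sum_insert (by simp)] at hsub
      rw [hBdiag j] at hsub
      have : u i j * d j + ∑ k ∈ Finset.Ico i j, u i k * B k j = d i * u i j := by
        rw [hsub]; exact heq
      linear_combination -this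
    -- induction on the distance from the diagonal
    have main : ∀ m : ℕ, ∀ i j : Fin n, (j : ℕ) ≤ (i : ℕ) + m → ‖u i j‖ ≤ M ^ m := by
      intro m
      induction m with
      | zero =>
        intro i j hij
        simp only [Nat.add_zero] at hij
        rcases eq_or_lt_of_le hij with h | h
        · have : j = i := Fin.ext h
          rw [this, h1 i, pow_zero]; simp
        · rw [h2 i j (Fin.lt_def.mpr h), pow_zero]; simp
      | succ m ih =>
        intro i j hij
        by_cases hle : (j : ℕ) ≤ (i : ℕ) + m
        · exact (ih i j hle).trans (pow_le_pow_right₀ hM1 (Nat.le_succ m))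
        · have hj' : (j : ℕ) = (i : ℕ) + m + 1 := by omega
          have hilt : i < j := Fin.lt_def.mpr (by omega)
          have hne : d i ≠ d j := fun h => absurd (hdinj h) (Fin.ne_of_lt hilt)
          have hdpos : 0 < ‖d i - d j‖ := norm_pos_iff.mpr (sub_ne_zero.mpr hne)
          have hsum : ‖∑ k ∈ Finset.Ico i j, u i k * B k j‖ ≤ M ^ m := by
            apply IsUltrametricDist.norm_sum_le_of_forall_le_of_nonneg (pow_nonneg hM0 m)
            intro k hk
            rw [Finset.mem_Ico] at hk
            have hk2 : (k : ℕ) ≤ (i : ℕ) + m := by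
              have := Fin.lt_def.mp hk.2; omega
            calc ‖u i k * B k j‖ = ‖u i k‖ * ‖B k j‖ := norm_mul _ _
              _ ≤ M ^ m * 1 :=
                mul_le_mul (ih i k hk2) (h3 k j) (norm_nonneg _) (pow_nonneg hM0 m)
              _ = M ^ m := mul_one _
          have hprod : ‖d i - d j‖ * ‖u i j‖ ≤ M ^ m := by
            rw [← norm_mul, hid i j hilt]; exact hsum
          calc ‖u i j‖ = ‖d i - d j‖⁻¹ * (‖d i - d j‖ * ‖u i j‖) := by
                field_simp
            _ ≤ M * M ^ m :=
                mul_le_mul (hMd i j (Fin.ne_of_lt hilt)) hprod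
                  (mul_nonneg (norm_nonneg _) (norm_nonneg _)) hM0
            _ = M ^ (m + 1) := (pow_succ' M m).symm
    have hjn : (j : ℕ) ≤ (i : ℕ) + n := le_trans (le_of_lt j.isLt) (Nat.le_add_left n i)
    exact main n i j hjn
  -- a compact superset
  set K : Set (Matrix (Fin n) (Fin n) ℚ_[p]) :=
    Set.univ.pi fun _ : Fin n => Set.univ.pi fun _ : Fin n =>
      Metric.closedBall (0 : ℚ_[p]) (M ^ n) with hK
  have hKcompact : IsCompact K :=
    isCompact_univ_pi fun _ =>
      isCompact_univ_pi fun _ => isCompact_closedBall (0 : ℚ_[p]) (M ^ n)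
  -- S is closed
  have hSclosed : IsClosed S := by
    have hSeq : S = {u : Matrix (Fin n) (Fin n) ℚ_[p] | ∀ i, u i i = 1} ∩
        {u | ∀ i j : Fin n, j < i → u i j = 0} ∩
        {u | ∀ i j, ‖(u.adjugate * D * u) i j‖ ≤ 1} := by
      ext u
      simp only [hS, Set.mem_setOf_eq, Set.mem_inter_iff]
      constructor
      · rintro ⟨h1, h2, h3⟩
        rw [aux_inv_eq_adjugate u h1 h2] at h3
        exact ⟨⟨h1, h2⟩, h3⟩
      · rintro ⟨⟨h1, h2⟩, h3⟩
        rw [← aux_inv_eq_adjugate u h1 h2] at h3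
        exact ⟨h1, h2, h3⟩
    rw [hSeq]
    refine IsClosed.inter (IsClosed.inter ?_ ?_) ?_
    · have h : {u : Matrix (Fin n) (Fin n) ℚ_[p] | ∀ i, u i i = 1} =
          ⋂ i, {u : Matrix (Fin n) (Fin n) ℚ_[p] | u i i = 1} := by
        ext; simp
      rw [h]
      exact isClosed_iInter fun i =>
        isClosed_eq (continuous_id.matrix_elem i i) continuous_const
    · have h : {u : Matrix (Fin n) (Fin n) ℚ_[p] | ∀ i j : Fin n, j < i → u i j = 0} =
          ⋂ i, ⋂ j, ⋂ (_ : j < i), {u : Matrix (Fin n) (Fin n) ℚ_[p] | u i j = 0} := by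
        ext; simp
      rw [h]
      exact isClosed_iInter fun i => isClosed_iInter fun j => isClosed_iInter fun _ =>
        isClosed_eq (continuous_id.matrix_elem i j) continuous_const
    · have h : {u : Matrix (Fin n) (Fin n) ℚ_[p] | ∀ i j, ‖(u.adjugate * D * u) i j‖ ≤ 1} =
          ⋂ i, ⋂ j, {u : Matrix (Fin n) (Fin n) ℚ_[p] | ‖(u.adjugate * D * u) i j‖ ≤ 1} := by
        ext; simp
      rw [h]
      refine isClosed_iInter fun i => isClosed_iInter fun j =>
        isClosed_le ?_ continuous_const
      exact ((((continuous_id.matrix_adjugate).matrix_mul continuous_const).matrix_mul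
        continuous_id).matrix_elem i j).norm
  exact hKcompact.of_isClosed_subset hSclosed fun u hu => by
    rw [hK]
    intro i _
    intro j _
    rw [Metric.mem_closedBall, dist_zero_right]
    exact key u hu i j
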